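/- Let q and r be positive integers with q ≥ 2 and 4r − 1 < 2q − 3. Then the point Q2 = (2q−3, 2q−3) does NOT lie in the convex hull of the other seven points {Q1, −Q1, −Q2, Q3, −Q3, Q4, −Q4}; in this case the dual Thurston polytope B_T*(P_{q,r}) is a genuine octagon with Q2 among its vertices. -/

import Mathlib

set_option maxHeartbeats 1000000 in
/-- For positive integers `q, r` with `q ≥ 2` and `4r − 1 < 2q − 3`, the point
`Q2 = (2q−3, 2q−3)` does NOT lie in the convex hull of the other seven points; in this case
the dual Thurston polytope is a genuine octagon with `Q2` among its vertices (i.e. `Q2` is an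
extreme point of the convex hull `H'` of all eight points). -/
theorem thurston_polytope_Q2_vertex (q r : ℕ)
    (hq : 0 < q) (hr : 0 < r) (hq2 : 2 ≤ q)
    (hrq : 4 * (r : ℝ) - 1 < 2 * (q : ℝ) - 3) :
    let Q1 : ℝ × ℝ := (-1, 4 * (r : ℝ) - 1)
    let Q2 : ℝ × ℝ := (2 * (q : ℝ) - 3, 2 * (q : ℝ) - 3)
    let Q3 : ℝ × ℝ := (2 * (q : ℝ) - 1, 2 * (q : ℝ) - 3)
    let Q4 : ℝ × ℝ := (2 * (q : ℝ) - 1, -(4 * (r : ℝ)) + 2 * q - 1)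
    Q2 ∉ convexHull ℝ ({Q1, -Q1, -Q2, Q3, -Q3, Q4, -Q4} : Set (ℝ × ℝ)) ∧
      Q2 ∈ Set.extremePoints ℝ
        (convexHull ℝ ({Q1, -Q1, Q2, -Q2, Q3, -Q3, Q4, -Q4} : Set (ℝ × ℝ))) := by
  intro Q1 Q2 Q3 Q4
  set a : ℝ := 2 * (q : ℝ) - 3 with ha
  set b : ℝ := 4 * (r : ℝ) - 1 with hb
  -- integrality: b ≤ a - 2
  have hrq' : 2 * r + 2 ≤ q := by
    by_contra h
    push_neg at h
    have : (q : ℝ) ≤ 2 * (r : ℝ) + 1 := by exact_mod_cast Nat.lt_succ_iff.mp h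
    linarith
  have hba : b ≤ a - 2 := by
    have : (2 * r + 2 : ℝ) ≤ (q : ℝ) := by exact_mod_cast hrq'
    simp only [ha, hb]; linarith
  have hb3 : (3 : ℝ) ≤ b := by
    have : (1 : ℝ) ≤ (r : ℝ) := by exact_mod_cast hr
    simp only [hb]; linarith
  have ha5 : (5 : ℝ) ≤ a := by linarith
  -- the separating linear functional
  obtain ⟨g, gdef⟩ : ∃ g : (ℝ × ℝ) →ₗ[ℝ] ℝ, ∀ p : ℝ × ℝ, g p = (a + 1) * p.2 - p.1 :=
    ⟨(a + 1) • (LinearMap.snd ℝ ℝ ℝ) - LinearMap.fst ℝ ℝ ℝ, fun p => by simp⟩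
  have hQ1c : Q1 = ((-1 : ℝ), b) := rfl
  have hQ2c : Q2 = (a, a) := rfl
  have hQ3c : Q3 = (a + 2, a) := by
    show ((2 * (q:ℝ) - 1, 2*(q:ℝ) - 3) : ℝ × ℝ) = (a + 2, a)
    simp only [ha, Prod.mk.injEq]
    exact ⟨by ring, trivial⟩
  have hQ4c : Q4 = (a + 2, a + 1 - b) := by
    show ((2 * (q:ℝ) - 1, -(4 * (r:ℝ)) + 2 * q - 1) : ℝ × ℝ) = (a + 2, a + 1 - b)
    simp only [ha, hb, Prod.mk.injEq]
    constructor <;> ring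
  have hgQ2 : g Q2 = a ^ 2 := by rw [hQ2c, gdef]; ring
  have vQ1 : g Q1 = (a + 1) * b + 1 := by rw [hQ1c, gdef]; norm_num
  have vQ3 : g Q3 = a ^ 2 - 2 := by rw [hQ3c, gdef]; ring
  have vQ4 : g Q4 = a ^ 2 + a - 1 - (a + 1) * b := by rw [hQ4c, gdef]; ring
  -- strict bound on the seven other points
  have hlt : ∀ p ∈ ({Q1, -Q1, -Q2, Q3, -Q3, Q4, -Q4} : Set (ℝ × ℝ)), g p < a ^ 2 := by
    intro p hp
    simp only [Set.mem_insert_iff, Set.mem_singleton_iff] at hp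
    have key : (a + 1) * (a - 2 - b) ≥ 0 := by nlinarith
    have key2 : (a + 1) * b ≥ (a + 1) * 3 := by nlinarith
    rcases hp with h | h | h | h | h | h | h
    · rw [h, vQ1]; nlinarith
    · rw [h, map_neg, vQ1]; nlinarith
    · rw [h, map_neg, hgQ2]; nlinarith
    · rw [h, vQ3]; nlinarith
    · rw [h, map_neg, vQ3]; nlinarith
    · rw [h, vQ4]; nlinarith
    · rw [h, map_neg, vQ4]; nlinarith
  -- weak bound on all eight points
  have hle : ∀ p ∈ ({Q1, -Q1, Q2, -Q2, Q3, -Q3, Q4, -Q4} : Set (ℝ × ℝ)), g p ≤ a ^ 2 := by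
    intro p hp
    simp only [Set.mem_insert_iff, Set.mem_singleton_iff] at hp
    rcases hp with h | h | h | hp'
    · exact le_of_lt (hlt _ (by subst h; simp))
    · exact le_of_lt (hlt _ (by subst h; simp))
    · subst h; exact le_of_eq hgQ2
    · refine le_of_lt (hlt _ ?_)
      rcases hp' with h | h | h | h | h <;> subst h <;> simp
  -- only Q2 attains the maximum among the eight points
  have huniq : ∀ p ∈ ({Q1, -Q1, Q2, -Q2, Q3, -Q3, Q4, -Q4} : Set (ℝ × ℝ)),
      g p = a ^ 2 → p = Q2 := by
    intro p hp hgp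
    simp only [Set.mem_insert_iff, Set.mem_singleton_iff] at hp
    rcases hp with h | h | h | hp'
    · exact absurd hgp (ne_of_lt (hlt _ (by subst h; simp)))
    · exact absurd hgp (ne_of_lt (hlt _ (by subst h; simp)))
    · exact h
    · exfalso
      refine absurd hgp (ne_of_lt (hlt _ ?_))
      rcases hp' with h | h | h | h | h <;> subst h <;> simp
  -- g ≤ a^2 on the full hull
  have hhull_le : ∀ p ∈ convexHull ℝ ({Q1, -Q1, Q2, -Q2, Q3, -Q3, Q4, -Q4} : Set (ℝ × ℝ)),
      g p ≤ a ^ 2 := by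
    intro p hp
    have hsub : convexHull ℝ ({Q1, -Q1, Q2, -Q2, Q3, -Q3, Q4, -Q4} : Set (ℝ × ℝ)) ⊆
        {x : ℝ × ℝ | g x ≤ a ^ 2} :=
      convexHull_min hle (convex_halfSpace_le (g.isLinear) _)
    exact hsub hp
  -- the face g = a^2 of the hull is {Q2}
  have hface : ∀ p ∈ convexHull ℝ ({Q1, -Q1, Q2, -Q2, Q3, -Q3, Q4, -Q4} : Set (ℝ × ℝ)),
      g p = a ^ 2 → p = Q2 := by
    intro p hp hgp
    rw [convexHull_eq] at hp
    obtain ⟨ι, t, w, z, hw0, hw1, hz, hcm⟩ := hp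
    rw [Finset.centerMass_eq_of_sum_1 _ _ hw1] at hcm
    have hgsum : ∑ i ∈ t, w i * g (z i) = a ^ 2 := by
      have : g (∑ i ∈ t, w i • z i) = ∑ i ∈ t, w i * g (z i) := by
        rw [map_sum]; exact Finset.sum_congr rfl fun i _ => by rw [map_smul]; rfl
      rw [← hgp, ← hcm, this]
    have hzero : ∑ i ∈ t, w i * (a ^ 2 - g (z i)) = 0 := by
      have : ∑ i ∈ t, w i * (a ^ 2 - g (z i))
          = (∑ i ∈ t, w i) * a ^ 2 - ∑ i ∈ t, w i * g (z i) := by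
        rw [Finset.sum_mul, ← Finset.sum_sub_distrib]
        exact Finset.sum_congr rfl fun i _ => by ring
      rw [this, hw1, hgsum]; ring
    have hterm : ∀ i ∈ t, w i * (a ^ 2 - g (z i)) = 0 := by
      rw [← Finset.sum_eq_zero_iff_of_nonneg]
      · exact hzero
      · intro i hi
        have := hle (z i) (hz i hi)
        have := hw0 i hi
        nlinarith
    have hzQ2 : ∀ i ∈ t, w i • z i = w i • Q2 := by
      intro i hi
      rcases eq_or_ne (w i) 0 with h0 | h0
      · rw [h0]; simp
      · have : a ^ 2 - g (z i) = 0 := by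
          rcases mul_eq_zero.mp (hterm i hi) with h | h
          · exact absurd h h0
          · exact h
        have hz2 : z i = Q2 := huniq (z i) (hz i hi) (by linarith [this])
        rw [hz2]
    calc p = ∑ i ∈ t, w i • z i := hcm.symm
      _ = ∑ i ∈ t, w i • Q2 := Finset.sum_congr rfl hzQ2
      _ = (∑ i ∈ t, w i) • Q2 := by rw [Finset.sum_smul]
      _ = Q2 := by rw [hw1, one_smul]
  constructor
  · -- Q2 not in the hull of the other seven points
    intro hmem
    have hsub : convexHull ℝ ({Q1, -Q1, -Q2, Q3, -Q3, Q4, -Q4} : Set (ℝ × ℝ)) ⊆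
        {x : ℝ × ℝ | g x < a ^ 2} :=
      convexHull_min hlt (convex_halfSpace_lt (g.isLinear) _)
    have : g Q2 < a ^ 2 := hsub hmem
    rw [hgQ2] at this
    exact lt_irrefl _ this
  · -- Q2 is an extreme point of the hull of all eight points
    rw [mem_extremePoints]
    refine ⟨subset_convexHull ℝ _ (by simp), ?_⟩
    intro x1 hx1 x2 hx2 hseg
    obtain ⟨s, u, hs, hu, hsu, hcomb⟩ := hseg
    have h1 : g x1 ≤ a ^ 2 := hhull_le x1 hx1
    have h2 : g x2 ≤ a ^ 2 := hhull_le x2 hx2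
    have hcomb' : s * g x1 + u * g x2 = a ^ 2 := by
      have : g (s • x1 + u • x2) = s * g x1 + u * g x2 := by
        rw [map_add, map_smul, map_smul]; rfl
      rw [← this, hcomb, hgQ2]
    have hg1 : g x1 = a ^ 2 := by nlinarith
    have hg2 : g x2 = a ^ 2 := by nlinarith
    exact ⟨hface x1 hx1 hg1, hface x2 hx2 hg2⟩
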